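/- Suppose w₁, w₂, ... are functions, κ₁, κ₂ constants, η = w₁ − ŵ₁ + κ₁ (where ŵ = w(x+δ)), and the k=2 relation η·(ŵ₁ applied shift by δ−γ, i.e., w₁(x+δ−γ)) = w₂ − ŵ₂ + κ₁w₁ + κ₂ holds. Working with finitely supported Fourier expansions w_k(x) = Σ_n w_{k,−n}e^{2πinx}, η(x) = Σ_n η_{−n}e^{2πinx}, p = e^{2πiδ}, q = e^{2πiγ}, p^n ≠ 1 for n ≠ 0: the zero Fourier mode of the k=2 relation yields κ₂ = Σ_{l≠0} (p^l q^{−l}/(1−p^l))·η_l·η_{−l}, given that w_{1,−n} = η_{−n}/(1−p^n) for n ≠ 0 and κ₁ = η₀. -/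

import Mathlib

open Complex Finset

/-- The trigonometric polynomial with (finitely supported) Fourier coefficients `a`. -/
noncomputable def trigPoly (a : ℤ →₀ ℂ) (x : ℂ) : ℂ :=
  ∑ n ∈ a.support, a n * Complex.exp (2 * (Real.pi : ℂ) * I * n * x)

namespace Stmt16Aux

noncomputable def c (n : ℤ) (x : ℂ) : ℂ := Complex.exp (2 * (Real.pi : ℂ) * I * n * x)

lemma c_ne_zero (n : ℤ) (x : ℂ) : c n x ≠ 0 := Complex.exp_ne_zero _

lemma c_add (n : ℤ) (x y : ℂ) : c n (x + y) = c n x * c n y := by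
  rw [c, c, c, ← Complex.exp_add]; ring_nf

lemma c_add' (n m : ℤ) (x : ℂ) : c (n + m) x = c n x * c m x := by
  rw [c, c, c, ← Complex.exp_add]; push_cast; ring_nf

lemma c_zero (x : ℂ) : c 0 x = 1 := by simp [c]

lemma c_apply_zero (n : ℤ) : c n 0 = 1 := by simp [c]

lemma c_pow (n : ℤ) (α : ℂ) : c n α = Complex.exp (2 * (Real.pi : ℂ) * I * α) ^ n := by
  rw [c, ← Complex.exp_int_mul]; ring_nf

lemma trigPoly_eq (a : ℤ →₀ ℂ) (x : ℂ) :
    trigPoly a x = a.sum fun n an => an * c n x := rfl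

/-- The character `x ↦ e^{2πinx}` as a monoid hom from `Multiplicative ℂ`. -/
noncomputable def χ (n : ℤ) : Multiplicative ℂ →* ℂ where
  toFun x := c n (Multiplicative.toAdd x)
  map_one' := by simpa using c_apply_zero n
  map_mul' x y := by simpa using c_add n (Multiplicative.toAdd x) (Multiplicative.toAdd y)

lemma χ_inj : Function.Injective χ := by
  intro n m h
  by_contra hnm
  have hd : ((n : ℂ) - m) ≠ 0 := by
    intro h0
    exact hnm (Int.cast_injective (α := ℂ) (by linear_combination h0))
  set x0 : ℂ := 1 / (2 * ((n : ℂ) - m)) with hx0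
  have hx : c n x0 = c m x0 := DFunLike.congr_fun h (Multiplicative.ofAdd x0)
  have h1 : Complex.exp (2 * (Real.pi : ℂ) * I * n * x0 - 2 * (Real.pi : ℂ) * I * m * x0) = 1 := by
    rw [Complex.exp_sub]
    rw [c, c] at hx
    rw [hx, div_self (Complex.exp_ne_zero _)]
  have h2 : 2 * (Real.pi : ℂ) * I * n * x0 - 2 * (Real.pi : ℂ) * I * m * x0
      = (Real.pi : ℂ) * I := by
    rw [hx0]; field_simp
  rw [h2, Complex.exp_pi_mul_I] at h1
  norm_num at h1

lemma trig_zero (a : ℤ →₀ ℂ) (h : ∀ x : ℂ, trigPoly a x = 0) : a = 0 := by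
  have li : LinearIndependent ℂ (fun n : ℤ => (χ n : Multiplicative ℂ → ℂ)) :=
    (linearIndependent_monoidHom (Multiplicative ℂ) ℂ).comp χ χ_inj
  refine linearIndependent_iff.mp li a ?_
  rw [Finsupp.linearCombination_apply]
  funext x
  have := h (Multiplicative.toAdd x)
  rw [trigPoly_eq] at this
  simpa [χ, Finsupp.sum, Finset.sum_apply] using this

lemma trigPoly_sub (a b : ℤ →₀ ℂ) (x : ℂ) :
    trigPoly (a - b) x = trigPoly a x - trigPoly b x := by
  rw [trigPoly_eq, trigPoly_eq, trigPoly_eq, Finsupp.sum_sub_index]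
  intro n b₁ b₂; ring

lemma trig_inj {A B : ℤ →₀ ℂ} (h : ∀ x, trigPoly A x = trigPoly B x) : A = B := by
  have h0 : A - B = 0 := trig_zero _ fun x => by rw [trigPoly_sub, h x, sub_self]
  exact sub_eq_zero.mp h0

/-- Shift of a trig polynomial by `α` on the Fourier side. -/
noncomputable def shift (α : ℂ) (a : ℤ →₀ ℂ) : ℤ →₀ ℂ :=
  ⟨a.support, fun n => a n * c n α, fun n => by
    simp [Finsupp.mem_support_iff, c_ne_zero]⟩

@[simp] lemma shift_apply (α : ℂ) (a : ℤ →₀ ℂ) (n : ℤ) :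
    shift α a n = a n * c n α := rfl

@[simp] lemma shift_support (α : ℂ) (a : ℤ →₀ ℂ) :
    (shift α a).support = a.support := rfl

lemma trig_shift (α : ℂ) (a : ℤ →₀ ℂ) (x : ℂ) :
    trigPoly (shift α a) x = trigPoly a (x + α) := by
  rw [trigPoly_eq, trigPoly_eq, Finsupp.sum, Finsupp.sum, shift_support]
  refine Finset.sum_congr rfl fun n _ => ?_
  rw [shift_apply, c_add]; ring

/-- Evaluation character on the Fourier index side. -/
noncomputable def ψ (x : ℂ) : Multiplicative ℤ →* ℂ where
  toFun n := c (Multiplicative.toAdd n) x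
  map_one' := by simpa using c_zero x
  map_mul' n m := by
    simpa using c_add' (Multiplicative.toAdd n) (Multiplicative.toAdd m) x

/-- Evaluation of a trig polynomial as an algebra hom on `AddMonoidAlgebra ℂ ℤ`. -/
noncomputable def ev (x : ℂ) : AddMonoidAlgebra ℂ ℤ →ₐ[ℂ] ℂ :=
  AddMonoidAlgebra.lift ℂ ℂ ℤ (ψ x)

lemma ev_eq (x : ℂ) (a : ℤ →₀ ℂ) : ev x (AddMonoidAlgebra.ofCoeff a) = trigPoly a x := by
  rw [ev, AddMonoidAlgebra.lift_apply, trigPoly_eq]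
  refine Finsupp.sum_congr fun n _ => ?_
  simp [ψ, smul_eq_mul]

lemma mul_apply_zero' (f g : AddMonoidAlgebra ℂ ℤ) :
    (f * g).coeff 0 = ∑ n ∈ f.coeff.support, f.coeff n * g.coeff (-n) := by
  classical
  rw [AddMonoidAlgebra.coeff_mul, Finsupp.sum]
  refine Finset.sum_congr rfl fun n _ => ?_
  simp only [show ∀ m : ℤ, n + m = 0 ↔ m = -n from fun m => by omega]
  rw [Finsupp.sum_ite_eq' g.coeff (-n) fun m b => f.coeff n * b]
  by_cases hmem : -n ∈ g.coeff.support
  · simp [hmem]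
  · simp [hmem, Finsupp.notMem_support_iff.mp hmem]

/-- The convolution product, with the `AddMonoidAlgebra` multiplication pinned down. -/
noncomputable def amul (f g : ℤ →₀ ℂ) : ℤ →₀ ℂ :=
  (AddMonoidAlgebra.ofCoeff f * AddMonoidAlgebra.ofCoeff g : AddMonoidAlgebra ℂ ℤ).coeff

lemma amul_apply_zero (f g : ℤ →₀ ℂ) :
    amul f g 0 = ∑ n ∈ f.support, f n * g (-n) :=
  mul_apply_zero' (AddMonoidAlgebra.ofCoeff f) (AddMonoidAlgebra.ofCoeff g)

lemma trig_amul (f g : ℤ →₀ ℂ) (x : ℂ) :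
    trigPoly (amul f g) x = trigPoly f x * trigPoly g x := by
  rw [← ev_eq, ← ev_eq, ← ev_eq]
  exact map_mul (ev x) (AddMonoidAlgebra.ofCoeff f) (AddMonoidAlgebra.ofCoeff g)

lemma trigPoly_add (a b : ℤ →₀ ℂ) (x : ℂ) :
    trigPoly (a + b) x = trigPoly a x + trigPoly b x := by
  rw [trigPoly_eq, trigPoly_eq, trigPoly_eq, Finsupp.sum_add_index']
  · intro n; ring
  · intro n b₁ b₂; ring

lemma trigPoly_smul (κ : ℂ) (a : ℤ →₀ ℂ) (x : ℂ) :
    trigPoly (κ • a) x = κ * trigPoly a x := by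
  rw [trigPoly_eq, trigPoly_eq, Finsupp.mul_sum, Finsupp.sum_smul_index]
  · exact Finsupp.sum_congr fun n _ => by ring
  · intro n; ring

lemma trigPoly_single0 (κ : ℂ) (x : ℂ) :
    trigPoly (Finsupp.single 0 κ) x = κ := by
  rw [trigPoly_eq, Finsupp.sum_single_index (by ring), c_zero, mul_one]

end Stmt16Aux

open Stmt16Aux

theorem stmt16 (δ γ κ₁ κ₂ : ℂ) (cη cw1 cw2 : ℤ →₀ ℂ)
    (p q : ℂ) (hpdef : p = Complex.exp (2 * (Real.pi : ℂ) * I * δ))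
    (hqdef : q = Complex.exp (2 * (Real.pi : ℂ) * I * γ))
    (hp : ∀ n : ℤ, n ≠ 0 → p ^ n ≠ 1)
    (hw1 : ∀ n : ℤ, n ≠ 0 → cw1 n = cη n / (1 - p ^ n))
    (hκ₁ : κ₁ = cη 0)
    (hrel : ∀ x : ℂ,
      trigPoly cη x * trigPoly cw1 (x + δ - γ)
        = trigPoly cw2 x - trigPoly cw2 (x + δ) + κ₁ * trigPoly cw1 x + κ₂) :
    κ₂ = ∑ n ∈ cη.support \ {0},
        (p ^ n * q ^ (-n) / (1 - p ^ n)) * (cη n * cη (-n)) := by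
  classical
  set F : ℤ → ℂ := fun n => p ^ n * q ^ (-n) / (1 - p ^ n) * (cη n * cη (-n)) with hF
  set T : Finset ℤ := cη.support \ {0} with hT
  have hE : Complex.exp (2 * (Real.pi : ℂ) * I * (δ - γ)) = p * q⁻¹ := by
    rw [mul_sub, Complex.exp_sub, hpdef, hqdef, div_eq_mul_inv]
  have hcdg : ∀ m : ℤ, c m (δ - γ) = p ^ m * q ^ (-m) := fun m => by
    rw [c_pow, hE, mul_zpow, inv_zpow, ← zpow_neg]
  set A : ℤ →₀ ℂ := amul cη (shift (δ - γ) cw1) with hA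
  set B : ℤ →₀ ℂ := cw2 - shift δ cw2 + κ₁ • cw1 + Finsupp.single 0 κ₂ with hB
  have hAB : A = B := by
    apply trig_inj
    intro x
    rw [hA, hB, trig_amul, trigPoly_add, trigPoly_add, trigPoly_sub, trigPoly_smul,
      trigPoly_single0, trig_shift, trig_shift]
    rw [show x + (δ - γ) = x + δ - γ from by ring]
    exact hrel x
  have key : (∑ n ∈ cη.support, cη n * (cw1 (-n) * c (-n) (δ - γ)))
      = κ₁ * cw1 0 + κ₂ := by
    have h0 : A 0 = B 0 := by rw [hAB]
    rw [hA, amul_apply_zero, hB] at h0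
    simp only [shift_apply, Finsupp.add_apply, Finsupp.sub_apply, Finsupp.smul_apply,
      smul_eq_mul, Finsupp.single_eq_same, c_zero, mul_one] at h0
    linear_combination h0
  have hsplit : κ₂ = ∑ n ∈ T, cη n * (cw1 (-n) * c (-n) (δ - γ)) := by
    by_cases h0 : (0 : ℤ) ∈ cη.support
    · rw [Finset.sum_eq_sum_sdiff_singleton_add h0
        (fun n => cη n * (cw1 (-n) * c (-n) (δ - γ)))] at key
      rw [neg_zero, c_zero, ← hκ₁, ← hT] at key
      linear_combination -key
    · have hz : cη 0 = 0 := Finsupp.notMem_support_iff.mp h0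
      have hκz : κ₁ = 0 := by rw [hκ₁, hz]
      have hTs : T = cη.support := by
        rw [hT, Finset.sdiff_singleton_eq_erase, Finset.erase_eq_of_notMem h0]
      rw [hκz] at key
      rw [hTs]
      simpa using key.symm
  have hterm : ∀ n ∈ T, cη n * (cw1 (-n) * c (-n) (δ - γ)) = F (-n) := by
    intro n hn
    have hn0 : n ≠ 0 := by
      rw [hT] at hn
      simpa using (Finset.mem_sdiff.mp hn).2
    have hnn : (-n : ℤ) ≠ 0 := neg_ne_zero.mpr hn0
    have hden : 1 - p ^ (-n : ℤ) ≠ 0 := sub_ne_zero.mpr (Ne.symm (hp (-n) hnn))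
    rw [hw1 (-n) hnn, hcdg (-n), hF]
    simp only [neg_neg]
    field_simp
  have hT'mem : ∀ n : ℤ, n ∈ T.map ⟨Neg.neg, neg_injective⟩ ↔ -n ∈ T := by
    intro n
    simp only [Finset.mem_map, Function.Embedding.coeFn_mk]
    constructor
    · rintro ⟨a, ha, rfl⟩; simpa using ha
    · intro h; exact ⟨-n, h, by simp⟩
  have hFz : ∀ n : ℤ, n ∉ T → n ≠ 0 → F n = 0 := by
    intro n hn hn0
    have : n ∉ cη.support := by
      intro hmem
      exact hn (by rw [hT]; exact Finset.mem_sdiff.mpr ⟨hmem, by simpa using hn0⟩)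
    rw [hF]
    simp [Finsupp.notMem_support_iff.mp this]
  have hFz' : ∀ n : ℤ, -n ∉ T → -n ≠ 0 → F n = 0 := by
    intro n hn hn0
    have : -n ∉ cη.support := by
      intro hmem
      exact hn (by rw [hT]; exact Finset.mem_sdiff.mpr ⟨hmem, by simpa using hn0⟩)
    rw [hF]
    simp [Finsupp.notMem_support_iff.mp this]
  have hre : ∑ n ∈ T, F (-n) = ∑ n ∈ T, F n := by
    have hmap : ∑ n ∈ T.map ⟨Neg.neg, neg_injective⟩, F n = ∑ n ∈ T, F (-n) := by
      rw [Finset.sum_map]; rfl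
    rw [← hmap]
    set T' := T.map ⟨Neg.neg, neg_injective⟩ with hT'
    have h1 : ∑ n ∈ T', F n = ∑ n ∈ T ∪ T', F n := by
      refine Finset.sum_subset Finset.subset_union_right fun n hn hn' => ?_
      have hnT : n ∈ T := (Finset.mem_union.mp hn).resolve_right hn'
      have hn0 : n ≠ 0 := by
        rw [hT] at hnT
        simpa using (Finset.mem_sdiff.mp hnT).2
      exact hFz' n (fun h => hn' ((hT'mem n).mpr h)) (neg_ne_zero.mpr hn0)
    have h2 : ∑ n ∈ T, F n = ∑ n ∈ T ∪ T', F n := by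
      refine Finset.sum_subset Finset.subset_union_left fun n hn hn' => ?_
      have hnT' : n ∈ T' := (Finset.mem_union.mp hn).resolve_left hn'
      have hn0 : (-n : ℤ) ≠ 0 := by
        have := (hT'mem n).mp hnT'
        rw [hT] at this
        simpa using (Finset.mem_sdiff.mp this).2
      exact hFz n hn' (fun h => hn0 (by rw [h, neg_zero]))
    rw [h1, h2]
  calc κ₂ = ∑ n ∈ T, cη n * (cw1 (-n) * c (-n) (δ - γ)) := hsplit
    _ = ∑ n ∈ T, F (-n) := Finset.sum_congr rfl hterm
    _ = ∑ n ∈ T, F n := hre
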